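/- In the coset-coding wiretap setting with a memoryless binary-input eavesdropper channel, the probability generating function of the conditional distribution of S^m given Z^n = z^n factorizes as G_{S^m|Z^n=z^n}(t) = Π_{i=1}^n (Φ(0|z_i) + Φ(1|z_i)·t^{a_i}), where a_i is the i-th column of A and Φ is the backward channel probability. -/

import Mathlib

open Finset

/-- Probability generating function of a distribution on `F_2^m`. -/
noncomputable def pgf {m : ℕ} (p : (Fin m → ZMod 2) → ℝ) :
    AddMonoidAlgebra ℝ (Fin m → ZMod 2) :=
  ∑ x : Fin m → ZMod 2, AddMonoidAlgebra.single x (p x)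

/-- Coset-coding codeword `X^n = (S^m ⊕ A_2·U^{n-m}, U^{n-m})`. -/
def codeword {m k : ℕ} (A2 : Matrix (Fin m) (Fin k) (ZMod 2))
    (s : Fin m → ZMod 2) (u : Fin k → ZMod 2) : (Fin m ⊕ Fin k) → ZMod 2 :=
  Sum.elim (fun j => s j + A2.mulVec u j) u

/-- The parity check matrix `A = [I_m | A_2]`. -/
def pcheck {m k : ℕ} (A2 : Matrix (Fin m) (Fin k) (ZMod 2)) :
    Matrix (Fin m) (Fin m ⊕ Fin k) (ZMod 2) :=
  Matrix.of fun j => Sum.elim (fun j' => if j = j' then 1 else 0) (fun i => A2 j i)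

/-- Joint pmf of `S^m` and Eve's observation `Z^n` through a memoryless channel `W`. -/
noncomputable def pSZdmc {m k : ℕ} {𝓩 : Type*} [Fintype 𝓩]
    (W : 𝓩 → ZMod 2 → ℝ) (A2 : Matrix (Fin m) (Fin k) (ZMod 2))
    (s : Fin m → ZMod 2) (z : (Fin m ⊕ Fin k) → 𝓩) : ℝ :=
  ∑ x : (Fin m ⊕ Fin k) → ZMod 2,
    (1 / 2 ^ (m + k) : ℝ) * (if (pcheck A2).mulVec x = s then 1 else 0) *
      ∏ i, W (z i) (x i)

/-- Backward channel probability `Φ(x|z) = W_E(z|x) / (W_E(z|0) + W_E(z|1))`. -/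
noncomputable def backward {𝓩 : Type*} (W : 𝓩 → ZMod 2 → ℝ) (x : ZMod 2) (z : 𝓩) : ℝ :=
  W z x / (W z 0 + W z 1)

section Aux

lemma sum_zmod_two {M : Type*} [AddCommMonoid M] (f : ZMod 2 → M) :
    ∑ c : ZMod 2, f c = f 0 + f 1 := by
  exact Fin.sum_univ_two f

lemma pcheck_mulVec_codeword {m k : ℕ} (A2 : Matrix (Fin m) (Fin k) (ZMod 2))
    (s : Fin m → ZMod 2) (u : Fin k → ZMod 2) :
    (pcheck A2).mulVec (codeword A2 s u) = s := by
  funext j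
  simp only [Matrix.mulVec, dotProduct, pcheck, codeword, Matrix.of_apply,
    Fintype.sum_sum_type, Sum.elim_inl, Sum.elim_inr, ite_mul, one_mul, zero_mul,
    Finset.sum_ite_eq, Finset.mem_univ, if_true]
  rw [add_assoc]
  simp [Matrix.mulVec, dotProduct, CharTwo.add_self_eq_zero]

/-- Parametrization of codewords. -/
def cwEquiv {m k : ℕ} (A2 : Matrix (Fin m) (Fin k) (ZMod 2)) :
    ((Fin m → ZMod 2) × (Fin k → ZMod 2)) ≃ ((Fin m ⊕ Fin k) → ZMod 2) where
  toFun p := codeword A2 p.1 p.2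
  invFun x := (fun j => x (Sum.inl j) + A2.mulVec (fun i => x (Sum.inr i)) j,
    fun i => x (Sum.inr i))
  left_inv p := by
    ext j
    · simp [codeword, add_assoc, CharTwo.add_self_eq_zero]
    · simp [codeword]
  right_inv x := by
    funext i
    cases i with
    | inl j => simp [codeword, add_assoc, CharTwo.add_self_eq_zero]
    | inr i => simp [codeword]

end Aux

/-- The probability generating function of the conditional distribution of `S^m` given
`Z^n = z^n` factorizes as `∏_{i=1}^n (Φ(0|z_i) + Φ(1|z_i) t^{a_i})`, where `a_i` is the
`i`-th column of `A = [I_m | A_2]`. -/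
theorem stmt8 {m k : ℕ} {𝓩 : Type*} [Fintype 𝓩]
    (W : 𝓩 → ZMod 2 → ℝ) (hW : ∀ z x, 0 ≤ W z x) (hpos : ∀ z, 0 < W z 0 + W z 1)
    (A2 : Matrix (Fin m) (Fin k) (ZMod 2)) :
    ∀ z : (Fin m ⊕ Fin k) → 𝓩,
      pgf (fun s => pSZdmc W A2 s z / (∑ s', pSZdmc W A2 s' z))
        = ∏ i : Fin m ⊕ Fin k,
            (AddMonoidAlgebra.single (0 : Fin m → ZMod 2) (backward W 0 (z i)) +
              AddMonoidAlgebra.single (fun j => pcheck A2 j i) (backward W 1 (z i))) := by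
  intro z
  have hDpos : (0:ℝ) < ∏ i, (W (z i) 0 + W (z i) 1) :=
    Finset.prod_pos fun i _ => hpos (z i)
  set D : ℝ := ∏ i, (W (z i) 0 + W (z i) 1) with hDdef
  set T : (Fin m → ZMod 2) → ℝ :=
    fun s => ∑ u : Fin k → ZMod 2, ∏ i, W (z i) (codeword A2 s u i) with hT
  have hc : ((1:ℝ) / 2 ^ (m + k)) ≠ 0 := by positivity
  -- joint pmf in parametrized form
  have hP : ∀ s, pSZdmc W A2 s z = (1 / 2 ^ (m + k) : ℝ) * T s := by
    intro s
    rw [pSZdmc, ← Equiv.sum_comp (cwEquiv A2)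
      (fun x => (1 / 2 ^ (m + k) : ℝ) * (if (pcheck A2).mulVec x = s then 1 else 0)
        * ∏ i, W (z i) (x i)), Fintype.sum_prod_type]
    simp only [cwEquiv, Equiv.coe_fn_mk, pcheck_mulVec_codeword, mul_ite, mul_one,
      mul_zero, ite_mul, zero_mul]
    rw [Finset.sum_comm]
    simp [hT, Finset.mul_sum]
  -- total sum
  have hSum : (∑ s', pSZdmc W A2 s' z) = (1 / 2 ^ (m + k) : ℝ) * D := by
    have h1 : ∑ s' : Fin m → ZMod 2, T s'
        = ∑ x : (Fin m ⊕ Fin k) → ZMod 2, ∏ i, W (z i) (x i) := by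
      rw [← Equiv.sum_comp (cwEquiv A2) (fun x => ∏ i, W (z i) (x i)),
        Fintype.sum_prod_type]
      rfl
    have h2 : ∑ x : (Fin m ⊕ Fin k) → ZMod 2, ∏ i, W (z i) (x i) = D := by
      rw [hDdef]
      have := Finset.prod_univ_sum (fun _ : Fin m ⊕ Fin k => (Finset.univ : Finset (ZMod 2)))
        (fun i c => W (z i) c)
      rw [Fintype.piFinset_univ] at this
      rw [← this]
      exact Finset.prod_congr rfl fun i _ => (sum_zmod_two _)
    simp only [hP]
    rw [← Finset.mul_sum, h1, h2]
  -- conditional pmf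
  have hcond : ∀ s, pSZdmc W A2 s z / (∑ s', pSZdmc W A2 s' z) = T s / D := by
    intro s
    rw [hP, hSum, mul_div_mul_left _ _ hc]
  -- compute RHS
  have hfac : ∀ i : Fin m ⊕ Fin k,
      (AddMonoidAlgebra.single (0 : Fin m → ZMod 2) (backward W 0 (z i)) +
        AddMonoidAlgebra.single (fun j => pcheck A2 j i) (backward W 1 (z i)))
      = ∑ c : ZMod 2, AddMonoidAlgebra.single (fun j => pcheck A2 j i * c)
          (backward W c (z i)) := by
    intro i
    rw [sum_zmod_two]
    have h0 : (fun j => pcheck A2 j i * (0:ZMod 2)) = (0 : Fin m → ZMod 2) := by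
      funext j; simp
    have h1 : (fun j => pcheck A2 j i * (1:ZMod 2)) = fun j => pcheck A2 j i := by
      funext j; simp
    rw [h0, h1]
  rw [Finset.prod_congr rfl fun i _ => hfac i]
  have hexp := Finset.prod_univ_sum (fun _ : Fin m ⊕ Fin k => (Finset.univ : Finset (ZMod 2)))
    (fun i c => (AddMonoidAlgebra.single (fun j => pcheck A2 j i * c)
      (backward W c (z i)) : AddMonoidAlgebra ℝ (Fin m → ZMod 2)))
  rw [Fintype.piFinset_univ] at hexp
  rw [hexp]
  have hps : ∀ x : (Fin m ⊕ Fin k) → ZMod 2,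
      (∏ i, (AddMonoidAlgebra.single (fun j => pcheck A2 j i * (x i))
        (backward W (x i) (z i)) : AddMonoidAlgebra ℝ (Fin m → ZMod 2)))
      = AddMonoidAlgebra.single ((pcheck A2).mulVec x) (∏ i, backward W (x i) (z i)) := by
    intro x
    rw [AddMonoidAlgebra.prod_single]
    congr 1
    funext j
    rw [Finset.sum_apply]
    rfl
  simp only [hps]
  rw [← Equiv.sum_comp (cwEquiv A2)
    (fun x => (AddMonoidAlgebra.single ((pcheck A2).mulVec x)
      (∏ i, backward W (x i) (z i)) : AddMonoidAlgebra ℝ (Fin m → ZMod 2))),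
    Fintype.sum_prod_type]
  simp only [cwEquiv, Equiv.coe_fn_mk, pcheck_mulVec_codeword]
  rw [pgf]
  refine Finset.sum_congr rfl fun s _ => ?_
  rw [hcond s, show (∑ y : Fin k → ZMod 2, AddMonoidAlgebra.single s (∏ i, backward W (codeword A2 s y i) (z i))) = AddMonoidAlgebra.single s (∑ y : Fin k → ZMod 2, ∏ i, backward W (codeword A2 s y i) (z i)) from (map_sum (AddMonoidAlgebra.singleAddHom s) _ _).symm]
  congr 1
  rw [hT, Finset.sum_div]
  refine Finset.sum_congr rfl fun u _ => ?_
  rw [hDdef, ← Finset.prod_div_distrib]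
  rfl
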